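/- Every rewrite step of the system R∖@ on extended as-patterns preserves ground semantics: if p rewrites in one step to p' with respect to R∖@, then ⟦p⟧ = ⟦p'⟧. -/
import Mathlib


/-- A constructor signature: a type of constructor symbols with arities. -/
structure Sig where
  C : Type
  ar : C → ℕ

/-- Values: ground constructor terms over the signature `S`. -/
inductive Val (S : Sig) : Type where
  | mk : (c : S.C) → (Fin (S.ar c) → Val S) → Val S

/-- Extended as-patterns: variables, constructor applications, sums,
complements, `⊥` and aliases `q @ p`. -/
inductive Pat (S : Sig) : Type where
  | var : ℕ → Pat S
  | cons : (c : S.C) → (Fin (S.ar c) → Pat S) → Pat S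
  | plus : Pat S → Pat S → Pat S
  | minus : Pat S → Pat S → Pat S
  | bot : Pat S
  | atp : Pat S → Pat S → Pat S

namespace Pat

variable {S : Sig}

/-- Variables occurring in a pattern. -/
def vars : Pat S → Set ℕ
  | var x => {x}
  | cons _ ps => ⋃ i, vars (ps i)
  | plus p q => vars p ∪ vars q
  | minus p q => vars p ∪ vars q
  | bot => ∅
  | atp q p => vars q ∪ vars p

/-- Linearity of extended as-patterns. -/
inductive Linear : Pat S → Prop where
  | var (x : ℕ) : Linear (var x)
  | cons (c : S.C) (ps : Fin (S.ar c) → Pat S) :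
      (∀ i, Linear (ps i)) →
      (∀ i j, i ≠ j → Disjoint (vars (ps i)) (vars (ps j))) →
      Linear (cons c ps)
  | plus {p q : Pat S} : Linear p → Linear q → Linear (plus p q)
  | minus {p q : Pat S} : Linear p → Linear q → Disjoint (vars p) (vars q) →
      Linear (minus p q)
  | bot : Linear bot
  | atp {q p : Pat S} : Linear q → Linear p → Disjoint (vars q) (vars p) →
      Linear (atp q p)

/-- Ground semantics of extended as-patterns. -/
def sem : Pat S → Set (Val S)
  | var _ => Set.univ
  | cons c ps => {v | ∃ vs : Fin (S.ar c) → Val S, v = Val.mk c vs ∧ ∀ i, vs i ∈ sem (ps i)}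
  | plus p q => sem p ∪ sem q
  | minus p q => sem p \ sem q
  | bot => ∅
  | atp q p => sem q ∩ sem p

/-- The extended instance relation: `Matches p v` means pattern `p` matches `v`. -/
def Matches : Pat S → Val S → Prop
  | var _, _ => True
  | cons c ps, v => ∃ vs : Fin (S.ar c) → Val S, v = Val.mk c vs ∧ ∀ i, Matches (ps i) (vs i)
  | plus p q, v => Matches p v ∨ Matches q v
  | minus p q, v => Matches p v ∧ ¬ Matches q v
  | bot, _ => False
  | atp q p, v => Matches q v ∧ Matches p v

/-- Additive patterns: patterns containing no complement `∖`. -/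
inductive Additive : Pat S → Prop where
  | var (x : ℕ) : Additive (var x)
  | cons (c : S.C) (ps : Fin (S.ar c) → Pat S) :
      (∀ i, Additive (ps i)) → Additive (cons c ps)
  | plus {p q : Pat S} : Additive p → Additive q → Additive (plus p q)
  | bot : Additive bot
  | atp {q p : Pat S} : Additive q → Additive p → Additive (atp q p)

/-- Patterns containing no `⊥`. A pattern is *pure additive* if it is
`Additive` and `BotFree`. -/
inductive BotFree : Pat S → Prop where
  | var (x : ℕ) : BotFree (var x)
  | cons (c : S.C) (ps : Fin (S.ar c) → Pat S) :
      (∀ i, BotFree (ps i)) → BotFree (cons c ps)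
  | plus {p q : Pat S} : BotFree p → BotFree q → BotFree (plus p q)
  | minus {p q : Pat S} : BotFree p → BotFree q → BotFree (minus p q)
  | atp {q p : Pat S} : BotFree q → BotFree p → BotFree (atp q p)

/-- The sum `p₁ + ⋯ + pₙ` of a list of patterns (`⊥` for the empty list). -/
def sumList : List (Pat S) → Pat S
  | [] => bot
  | [p] => p
  | p :: q :: r => plus p (sumList (q :: r))

variable [Fintype S.C]

/-- The sum `Σ_{c ∈ C} c(z₁,…,z_m) ∖ g(t₁,…,tₙ)`, where the fresh variables
are given by `z i = fv i`. -/
noncomputable def sumVM (fv : ℕ → ℕ) (g : S.C) (ts : Fin (S.ar g) → Pat S) : Pat S :=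
  sumList ((Finset.univ : Finset S.C).toList.map fun c =>
    minus (cons c fun i => var (fv i)) (cons g ts))

/-- One step of the rewriting system `R∖@` of Figure 3 (closed under contexts).
`fv` enumerates the fresh variables used by rule (M6'). -/
inductive Step (fv : ℕ → ℕ) : Pat S → Pat S → Prop where
  | addL {v : Pat S} : Additive v → Step fv (plus bot v) v
  | addR {v : Pat S} : Additive v → Step fv (plus v bot) v
  | empty {c : S.C} {ps : Fin (S.ar c) → Pat S} (i : Fin (S.ar c)) :
      (∀ j, Additive (ps j)) → ps i = bot → Step fv (cons c ps) bot
  | emptyA {x : ℕ} : Step fv (atp (var x) bot) bot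
  | dist {c : S.C} {ps : Fin (S.ar c) → Pat S} (i : Fin (S.ar c)) {u w : Pat S} :
      (∀ j, Additive (ps j)) → ps i = plus u w →
      Step fv (cons c ps)
        (plus (cons c (Function.update ps i u)) (cons c (Function.update ps i w)))
  | distAt {x : ℕ} {v1 v2 : Pat S} : Additive v1 → Additive v2 →
      Step fv (atp (var x) (plus v1 v2)) (plus (atp (var x) v1) (atp (var x) v2))
  | minusMV {v : Pat S} {x : ℕ} : Additive v → Step fv (minus v (var x)) bot
  | minusMB {v : Pat S} : Additive v → Step fv (minus v bot) v
  | minusMP {w v1 v2 : Pat S} : Additive w → Additive v1 → Additive v2 →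
      Step fv (minus w (plus v1 v2)) (minus (minus w v1) v2)
  | minusVM {x : ℕ} {g : S.C} {ts : Fin (S.ar g) → Pat S} :
      (∀ j, Additive (ts j)) → (∀ j, BotFree (ts j)) →
      Step fv (minus (var x) (cons g ts)) (atp (var x) (sumVM fv g ts))
  | minusBM {g : S.C} {vs : Fin (S.ar g) → Pat S} :
      (∀ j, Additive (vs j)) → Step fv (minus bot (cons g vs)) bot
  | minusPM {v w : Pat S} {g : S.C} {vs : Fin (S.ar g) → Pat S} :
      Additive v → Additive w → (∀ j, Additive (vs j)) →
      Step fv (minus (plus v w) (cons g vs))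
        (plus (minus v (cons g vs)) (minus w (cons g vs)))
  | minusFF {f : S.C} {vs ts : Fin (S.ar f) → Pat S} :
      (∀ j, Additive (vs j)) → (∀ j, Additive (ts j)) → (∀ j, BotFree (ts j)) →
      Step fv (minus (cons f vs) (cons f ts))
        (sumList (List.ofFn fun i => cons f (Function.update vs i (minus (vs i) (ts i)))))
  | minusFG {f g : S.C} {vs : Fin (S.ar f) → Pat S} {ws : Fin (S.ar g) → Pat S} :
      f ≠ g → (∀ j, Additive (vs j)) → (∀ j, Additive (ws j)) →
      Step fv (minus (cons f vs) (cons g ws)) (cons f vs)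
  | minusAM {x : ℕ} {v w : Pat S} : Additive v → Additive w →
      Step fv (minus (atp (var x) v) w) (atp (var x) (minus v w))
  | minusMA {x : ℕ} {v w : Pat S} : Additive v → Additive w →
      Step fv (minus v (atp (var x) w)) (minus v w)
  | congCons {c : S.C} {ps : Fin (S.ar c) → Pat S} (i : Fin (S.ar c)) {p' : Pat S} :
      Step fv (ps i) p' → Step fv (cons c ps) (cons c (Function.update ps i p'))
  | congPlusL {p p' q : Pat S} : Step fv p p' → Step fv (plus p q) (plus p' q)
  | congPlusR {p q q' : Pat S} : Step fv q q' → Step fv (plus p q) (plus p q')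
  | congMinusL {p p' q : Pat S} : Step fv p p' → Step fv (minus p q) (minus p' q)
  | congMinusR {p q q' : Pat S} : Step fv q q' → Step fv (minus p q) (minus p q')
  | congAliasL {q q' p : Pat S} : Step fv q q' → Step fv (atp q p) (atp q' p)
  | congAliasR {q p p' : Pat S} : Step fv p p' → Step fv (atp q p) (atp q p')

/-- Patterns containing no sum `+`. -/
inductive PlusFree : Pat S → Prop where
  | var (x : ℕ) : PlusFree (var x)
  | cons (c : S.C) (ps : Fin (S.ar c) → Pat S) :
      (∀ i, PlusFree (ps i)) → PlusFree (cons c ps)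
  | minus {p q : Pat S} : PlusFree p → PlusFree q → PlusFree (minus p q)
  | bot : PlusFree bot
  | atp {q p : Pat S} : PlusFree q → PlusFree p → PlusFree (atp q p)

/-- Terms in which every `+` symbol has only `+` symbols above it:
sums are pushed to the top. -/
inductive TopPlus : Pat S → Prop where
  | leaf {p : Pat S} : PlusFree p → TopPlus p
  | plus {p q : Pat S} : TopPlus p → TopPlus q → TopPlus (plus p q)

/-- `q` is a normal form of `p` w.r.t. the relation `R`. -/
def NormalFormOf (R : Pat S → Pat S → Prop) (p q : Pat S) : Prop :=
  Relation.ReflTransGen R p q ∧ ¬ ∃ r, R q r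

end Pat

namespace Pat

variable {S : Sig}

lemma mk_inj {c : S.C} {vs vs' : Fin (S.ar c) → Val S}
    (h : Val.mk c vs = Val.mk c vs') : vs = vs' := by
  injection h

lemma mem_sem_cons {c : S.C} {ps : Fin (S.ar c) → Pat S} {v : Val S} :
    v ∈ (cons c ps).sem ↔ ∃ vs, v = Val.mk c vs ∧ ∀ i, vs i ∈ (ps i).sem := Iff.rfl

lemma sem_sumList (L : List (Pat S)) (v : Val S) :
    v ∈ (sumList L).sem ↔ ∃ p ∈ L, v ∈ p.sem := by
  induction L with
  | nil => simp [sumList, sem]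
  | cons p rest ih =>
    cases rest with
    | nil => simp [sumList, sem]
    | cons q r =>
      show v ∈ (plus p (sumList (q :: r))).sem ↔ _
      simp only [sem, Set.mem_union, ih, List.mem_cons]
      constructor
      · rintro (h | ⟨w, hw, hv⟩)
        · exact ⟨p, Or.inl rfl, h⟩
        · exact ⟨w, Or.inr hw, hv⟩
      · rintro ⟨w, (rfl | hw), hv⟩
        · exact Or.inl hv
        · exact Or.inr ⟨w, hw, hv⟩

theorem step_sem [Fintype S.C] (fv : ℕ → ℕ) {p p' : Pat S}
    (h : Step fv p p') : p.sem = p'.sem := by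
  induction h with
  | addL _ => simp [sem]
  | addR _ => simp [sem]
  | empty i _ hpi =>
    ext v
    simp only [sem, Set.mem_empty_iff_false, iff_false, Set.mem_setOf_eq]
    rintro ⟨vs, rfl, hv⟩
    have := hv i
    rw [hpi] at this
    exact this
  | emptyA => simp [sem]
  | @dist c ps i u w _ hpi =>
    ext v
    simp only [sem, Set.mem_union, Set.mem_setOf_eq]
    constructor
    · rintro ⟨vs, rfl, hv⟩
      have hi := hv i
      rw [hpi] at hi
      rcases hi with hi | hi
      · refine Or.inl ⟨vs, rfl, fun j => ?_⟩
        rcases eq_or_ne j i with rfl | hne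
        · simpa [Function.update_self] using hi
        · simpa [Function.update_of_ne hne] using hv j
      · refine Or.inr ⟨vs, rfl, fun j => ?_⟩
        rcases eq_or_ne j i with rfl | hne
        · simpa [Function.update_self] using hi
        · simpa [Function.update_of_ne hne] using hv j
    · rintro (⟨vs, rfl, hv⟩ | ⟨vs, rfl, hv⟩) <;>
        refine ⟨vs, rfl, fun j => ?_⟩ <;>
        rcases eq_or_ne j i with rfl | hne
      · rw [hpi]
        exact Or.inl (by simpa [Function.update_self] using hv j)
      · simpa [Function.update_of_ne hne] using hv j
      · rw [hpi]
        exact Or.inr (by simpa [Function.update_self] using hv j)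
      · simpa [Function.update_of_ne hne] using hv j
  | distAt _ _ =>
    ext v; simp only [sem, Set.mem_inter_iff, Set.mem_union, Set.mem_univ, true_and]
  | minusMV _ => simp [sem]
  | minusMB _ => simp [sem]
  | minusMP _ _ _ =>
    ext v
    simp only [sem, Set.mem_diff, Set.mem_union]
    tauto
  | @minusVM x g ts _ _ =>
    ext v
    simp only [sem, sumVM, Set.mem_diff, Set.mem_inter_iff, Set.mem_univ, true_and,
      sem_sumList, List.mem_map, Finset.mem_toList, Finset.mem_univ, true_and]
    constructor
    · intro hv
      cases v with
      | mk c0 vs0 =>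
        refine ⟨_, ⟨c0, rfl⟩, ?_⟩
        simp only [sem, Set.mem_diff, Set.mem_setOf_eq]
        exact ⟨⟨vs0, rfl, fun i => by simp [sem]⟩, hv⟩
    · rintro ⟨_, ⟨c0, rfl⟩, hv⟩
      simp only [sem, Set.mem_diff] at hv
      exact hv.2
  | minusBM _ => simp [sem]
  | minusPM _ _ _ =>
    ext v
    simp only [sem, Set.mem_diff, Set.mem_union]
    tauto
  | @minusFF f vs ts _ _ _ =>
    ext v
    simp only [sem, Set.mem_diff, sem_sumList, List.mem_ofFn]
    constructor
    · rintro ⟨⟨w, rfl, hw⟩, hnot⟩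
      have : ∃ i, w i ∉ (ts i).sem := by
        by_contra hc
        push_neg at hc
        exact hnot ⟨w, rfl, hc⟩
      obtain ⟨i, hi⟩ := this
      refine ⟨_, ⟨i, rfl⟩, w, rfl, fun j => ?_⟩
      rcases eq_or_ne j i with rfl | hne
      · rw [Function.update_self]
        exact ⟨hw j, hi⟩
      · rw [Function.update_of_ne hne]
        exact hw j
    · rintro ⟨_, ⟨i, rfl⟩, w, rfl, hw⟩
      have hii : w i ∈ (minus (vs i) (ts i)).sem := by
        simpa [Function.update_self] using hw i
      refine ⟨⟨w, rfl, fun j => ?_⟩, ?_⟩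
      · rcases eq_or_ne j i with rfl | hne
        · exact hii.1
        · simpa [Function.update_of_ne hne] using hw j
      · rintro ⟨w', heq, hw'⟩
        have := mk_inj heq
        subst this
        exact hii.2 (hw' i)
  | @minusFG f g vs ws hfg _ _ =>
    ext v
    simp only [sem, Set.mem_diff, Set.mem_setOf_eq, and_iff_left_iff_imp]
    rintro ⟨w, rfl, hw⟩ ⟨w', heq, hw'⟩
    injection heq with h1 h2
    exact hfg h1
  | minusAM _ _ =>
    ext v
    simp only [sem, Set.mem_diff, Set.mem_inter_iff, Set.mem_univ, true_and]
  | minusMA _ _ =>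
    ext v
    simp only [sem, Set.mem_diff, Set.mem_inter_iff, Set.mem_univ, true_and]
  | congCons i _ ih =>
    ext v
    simp only [mem_sem_cons]
    constructor <;> rintro ⟨w, rfl, hw⟩ <;> refine ⟨w, rfl, fun j => ?_⟩ <;>
      rcases eq_or_ne j i with rfl | hne
    · rw [Function.update_self, ← ih]; exact hw j
    · rw [Function.update_of_ne hne]; exact hw j
    · have := hw j; rw [Function.update_self, ← ih] at this; exact this
    · have := hw j; rw [Function.update_of_ne hne] at this; exact this
  | congPlusL _ ih => simp only [sem, ih]
  | congPlusR _ ih => simp only [sem, ih]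
  | congMinusL _ ih => simp only [sem, ih]
  | congMinusR _ ih => simp only [sem, ih]
  | congAliasL _ ih => simp only [sem, ih]
  | congAliasR _ ih => simp only [sem, ih]

end Pat

/-- Complement semantics preservation for `R∖@`:
every rewrite step of `R∖@` preserves ground semantics. -/
theorem stmt11 (S : Sig) [Fintype S.C] (fv : ℕ → ℕ) (hfv : Function.Injective fv)
    (p p' : Pat S) (hlin : p.Linear) (hstep : Pat.Step fv p p') :
    p.sem = p'.sem := Pat.step_sem fv hstep
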